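/- Let X be a locally compact, second countable Hausdorff topological space, let (\mu_n)_{n \in \mathbb{N}} be a sequence of signed Borel measures on X and \omega a signed Borel measure on X, all of whose total variations are finite on compact sets. Let Z \subseteq X be a closed subset with |\omega|(Z) = 0. Assume that (\mu_n) converges vaguely to \omega on the open set X \setminus Z, and that for every compact subset C \subseteq Z and every \varepsilon > 0 there exists an open set U \supseteq C with \limsup_{n \to \infty} |\mu_n|(U) \le \varepsilon. Then (\mu_n) converges vaguely to \omega on all of X. -/

import Mathlib

open MeasureTheory Filter Topology

/-- A sequence of signed Borel measures (given as differences `μp n - μm n` of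
positive measures) converges vaguely to the signed measure `ωp - ωm` on an open
set `U` if integrals of continuous functions compactly supported in `U` converge. -/
def VagueOn {X : Type*} [TopologicalSpace X] [MeasurableSpace X]
    (μp μm : ℕ → Measure X) (ωp ωm : Measure X) (U : Set X) : Prop :=
  ∀ f : X → ℝ, Continuous f → IsCompact (tsupport f) → tsupport f ⊆ U →
    Tendsto (fun n => (∫ x, f x ∂(μp n)) - ∫ x, f x ∂(μm n)) atTop
      (𝓝 ((∫ x, f x ∂ωp) - ∫ x, f x ∂ωm))

/-- Bound for the integral of a function supported in a compact set. -/
lemma aux_integral_bound {X : Type*} [TopologicalSpace X] [MeasurableSpace X]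
    [OpensMeasurableSpace X] [T2Space X]
    (ν : Measure X) (h : X → ℝ) (hh : Continuous h) (S : Set X) (hS : IsCompact S)
    (hsupp : ∀ x, x ∉ S → h x = 0) {M : ℝ} (hM : ∀ x, ‖h x‖ ≤ M)
    [IsFiniteMeasureOnCompacts ν] :
    ‖∫ x, h x ∂ν‖ ≤ M * (ν S).toReal := by
  rw [← MeasureTheory.setIntegral_eq_integral_of_forall_compl_eq_zero hsupp]
  exact MeasureTheory.norm_setIntegral_le_of_norm_le_const hS.measure_lt_top
    (fun x _ => hM x)

/-- If a sequence of signed measures converges vaguely to `ω` outside of a closed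
`ω`-null set `Z`, and the total variations `|μ n|` are asymptotically uniformly small
on neighborhoods of compact subsets of `Z`, then vague convergence holds on all of `X`. -/
theorem vague_convergence_of_convergence_off_closed_null_set
    {X : Type*} [TopologicalSpace X] [LocallyCompactSpace X] [T2Space X]
    [SecondCountableTopology X] [MeasurableSpace X] [BorelSpace X]
    (μp μm : ℕ → Measure X) (ωp ωm : Measure X)
    (hμp : ∀ n, IsFiniteMeasureOnCompacts (μp n))
    (hμm : ∀ n, IsFiniteMeasureOnCompacts (μm n))
    (hωp : IsFiniteMeasureOnCompacts ωp) (hωm : IsFiniteMeasureOnCompacts ωm)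
    (Z : Set X) (hZclosed : IsClosed Z) (hZnull : (ωp + ωm) Z = 0)
    (hconv : VagueOn μp μm ωp ωm Zᶜ)
    (hsmall : ∀ C : Set X, C ⊆ Z → IsCompact C → ∀ ε : ℝ, 0 < ε →
      ∃ U : Set X, IsOpen U ∧ C ⊆ U ∧
        Filter.limsup (fun n => μp n U + μm n U) atTop ≤ ENNReal.ofReal ε) :
    VagueOn μp μm ωp ωm Set.univ := by
  intro f hf hKf _
  rw [Metric.tendsto_nhds]
  intro ε hε
  -- a bound for f
  obtain ⟨M0, hM0⟩ := HasCompactSupport.exists_bound_of_continuous hKf hf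
  set M : ℝ := max M0 1 with hMdef
  have hM1 : (1 : ℝ) ≤ M := le_max_right _ _
  have hMpos : 0 < M := lt_of_lt_of_le one_pos hM1
  have hM : ∀ x, ‖f x‖ ≤ M := fun x => (hM0 x).trans (le_max_left _ _)
  set δ : ℝ := ε / (6 * M) with hδdef
  have hδpos : 0 < δ := div_pos hε (by positivity)
  -- the compact set C = tsupport f ∩ Z
  set K : Set X := tsupport f with hKdef
  have hKclosed : IsClosed K := isClosed_tsupport f
  set C : Set X := K ∩ Z with hCdef
  have hCcomp : IsCompact C := hKf.inter_right hZclosed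
  have hCZ : C ⊆ Z := Set.inter_subset_right
  -- small open set for the μ n
  obtain ⟨U, hUopen, hCU, hUsmall⟩ := hsmall C hCZ hCcomp δ hδpos
  -- ω-null
  have hωpZ : ωp Z = 0 := by
    have := hZnull
    rw [Measure.add_apply] at this
    exact (add_eq_zero.mp this).1
  have hωmZ : ωm Z = 0 := by
    have := hZnull
    rw [Measure.add_apply] at this
    exact (add_eq_zero.mp this).2
  -- outer regularity of ωp, ωm
  haveI := hωp; haveI := hωm
  have hωpC : ωp C < ENNReal.ofReal δ := by
    rw [measure_mono_null hCZ hωpZ]; exact ENNReal.ofReal_pos.mpr hδpos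
  have hωmC : ωm C < ENNReal.ofReal δ := by
    rw [measure_mono_null hCZ hωmZ]; exact ENNReal.ofReal_pos.mpr hδpos
  obtain ⟨Vp, hCVp, hVpopen, hVp⟩ := C.exists_isOpen_lt_of_lt _ hωpC
  obtain ⟨Vm, hCVm, hVmopen, hVm⟩ := C.exists_isOpen_lt_of_lt _ hωmC
  set W : Set X := U ∩ Vp ∩ Vm with hWdef
  have hWopen : IsOpen W := (hUopen.inter hVpopen).inter hVmopen
  have hCW : C ⊆ W := fun x hx => ⟨⟨hCU hx, hCVp hx⟩, hCVm hx⟩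
  have hWU : W ⊆ U := fun x hx => hx.1.1
  have hWVp : W ⊆ Vp := fun x hx => hx.1.2
  have hWVm : W ⊆ Vm := fun x hx => hx.2
  -- compact sets L, L' with C ⊆ int L ⊆ L ⊆ int L' ⊆ L' ⊆ W
  obtain ⟨L, hLcomp, hCL, hLW⟩ := exists_compact_between hCcomp hWopen hCW
  obtain ⟨L', hL'comp, hLL', hL'W⟩ := exists_compact_between hLcomp hWopen hLW
  -- cutoff function χ
  obtain ⟨χ, hχ1, hχ0, hχsupp, hχ01⟩ :=
    exists_continuous_one_zero_of_isCompact hLcomp isOpen_interior.isClosed_compl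
      (Set.disjoint_compl_right_iff_subset.mpr hLL')
  -- the support of χ is inside L' ⊆ W
  have hχS : tsupport χ ⊆ L' := by
    apply closure_minimal _ hL'comp.isClosed
    intro x hx
    by_contra hxL'
    have : x ∈ (interior L')ᶜ := fun hxi => hxL' (interior_subset hxi)
    exact hx (hχ0 this)
  set S : Set X := tsupport χ with hSdef
  have hScomp : IsCompact S := hχsupp
  have hSW : S ⊆ W := hχS.trans hL'W
  -- the pieces g and h
  set g : X → ℝ := fun x => f x * (1 - χ x) with hgdef
  set h : X → ℝ := fun x => f x * χ x with hhdef
  have hgcont : Continuous g := hf.mul (continuous_const.sub χ.continuous)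
  have hhcont : Continuous h := hf.mul χ.continuous
  have hfgh : ∀ x, f x = g x + h x := fun x => by simp [hgdef, hhdef]; ring
  -- support of g
  have hgsupp : Function.support g ⊆ K \ interior L := by
    intro x hx
    simp only [Function.mem_support, hgdef] at hx
    obtain ⟨hfx, hχx⟩ := mul_ne_zero_iff.mp hx
    refine ⟨subset_closure hfx, fun hxL => ?_⟩
    have : χ x = 1 := hχ1 (interior_subset hxL)
    rw [this] at hχx; simp at hχx
  have hgt : tsupport g ⊆ K \ interior L := by
    apply closure_minimal hgsupp (hKclosed.inter isOpen_interior.isClosed_compl)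
  have hgtcomp : IsCompact (tsupport g) :=
    hKf.of_isClosed_subset (isClosed_tsupport g) (hgt.trans Set.diff_subset)
  have hgtZ : tsupport g ⊆ Zᶜ := by
    intro x hx
    obtain ⟨hxK, hxL⟩ := hgt hx
    intro hxZ
    exact hxL (hCL ⟨hxK, hxZ⟩)
  -- convergence for g
  have hG := hconv g hgcont hgtcomp hgtZ
  rw [Metric.tendsto_nhds] at hG
  have hGε := hG (ε / 3) (by linarith)
  -- compact supports
  have hhCS : HasCompactSupport h := hχsupp.mul_left
  have hgCS : HasCompactSupport g := hgtcomp
  have hhS : ∀ x, x ∉ S → h x = 0 := by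
    intro x hx
    have : χ x = 0 := image_eq_zero_of_notMem_tsupport hx
    simp [hhdef, this]
  have hhM : ∀ x, ‖h x‖ ≤ M := by
    intro x
    rw [hhdef]
    calc ‖f x * χ x‖ = ‖f x‖ * ‖χ x‖ := norm_mul _ _
      _ ≤ M * 1 := by
          apply mul_le_mul (hM x) _ (norm_nonneg _) hMpos.le
          rw [Real.norm_eq_abs, abs_le]
          exact ⟨le_trans (by norm_num) (hχ01 x).1, (hχ01 x).2⟩
      _ = M := mul_one M
  -- decomposition of integrals
  have hdecomp : ∀ (ν : Measure X), IsFiniteMeasureOnCompacts ν →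
      ∫ x, f x ∂ν = (∫ x, g x ∂ν) + ∫ x, h x ∂ν := by
    intro ν hν
    haveI := hν
    rw [← integral_add (hgcont.integrable_of_hasCompactSupport hgCS)
      (hhcont.integrable_of_hasCompactSupport hhCS)]
    exact integral_congr_ae (Eventually.of_forall hfgh)
  -- bounds on the h-integrals for ω
  have hHωp : ‖∫ x, h x ∂ωp‖ ≤ M * δ := by
    refine (aux_integral_bound ωp h hhcont S hScomp hhS hhM).trans ?_
    apply mul_le_mul_of_nonneg_left _ hMpos.le
    have : ωp S < ENNReal.ofReal δ := lt_of_le_of_lt (measure_mono (hSW.trans hWVp)) hVp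
    exact (ENNReal.toReal_lt_of_lt_ofReal this).le
  have hHωm : ‖∫ x, h x ∂ωm‖ ≤ M * δ := by
    refine (aux_integral_bound ωm h hhcont S hScomp hhS hhM).trans ?_
    apply mul_le_mul_of_nonneg_left _ hMpos.le
    have : ωm S < ENNReal.ofReal δ := lt_of_le_of_lt (measure_mono (hSW.trans hWVm)) hVm
    exact (ENNReal.toReal_lt_of_lt_ofReal this).le
  -- eventual smallness of μ n on S
  have hlimsup : Filter.limsup (fun n => μp n S + μm n S) atTop ≤ ENNReal.ofReal δ := by
    refine le_trans (Filter.limsup_le_limsup (Eventually.of_forall fun n => ?_)) hUsmall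
    exact add_le_add (measure_mono (hSW.trans hWU)) (measure_mono (hSW.trans hWU))
  have hev : ∀ᶠ n in atTop, μp n S + μm n S < ENNReal.ofReal (2 * δ) := by
    refine Filter.eventually_lt_of_limsup_lt (lt_of_le_of_lt hlimsup ?_)
    exact ENNReal.ofReal_lt_ofReal_iff_of_nonneg hδpos.le |>.mpr (by linarith)
  -- combine
  filter_upwards [hGε, hev] with n hGn hμn
  have hdμp := hdecomp (μp n) (hμp n)
  have hdμm := hdecomp (μm n) (hμm n)
  have hdωp := hdecomp ωp hωp
  have hdωm := hdecomp ωm hωm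
  -- bounds on h-integrals for μ n
  haveI := hμp n; haveI := hμm n
  have hμpS : (μp n S).toReal + (μm n S).toReal < 2 * δ := by
    have hfin1 : μp n S ≠ ⊤ := (hScomp.measure_lt_top).ne
    have hfin2 : μm n S ≠ ⊤ := (hScomp.measure_lt_top).ne
    have := ENNReal.toReal_lt_of_lt_ofReal hμn
    rwa [ENNReal.toReal_add hfin1 hfin2] at this
  have hHμp : ‖∫ x, h x ∂(μp n)‖ ≤ M * (μp n S).toReal :=
    aux_integral_bound (μp n) h hhcont S hScomp hhS hhM
  have hHμm : ‖∫ x, h x ∂(μm n)‖ ≤ M * (μm n S).toReal :=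
    aux_integral_bound (μm n) h hhcont S hScomp hhS hhM
  -- final estimate
  rw [Real.dist_eq] at hGn ⊢
  rw [hdμp, hdμm, hdωp, hdωm]
  have key : (∫ x, g x ∂μp n + ∫ x, h x ∂μp n) - (∫ x, g x ∂μm n + ∫ x, h x ∂μm n) -
      ((∫ x, g x ∂ωp + ∫ x, h x ∂ωp) - (∫ x, g x ∂ωm + ∫ x, h x ∂ωm)) =
      ((∫ x, g x ∂μp n - ∫ x, g x ∂μm n) - (∫ x, g x ∂ωp - ∫ x, g x ∂ωm)) +
      (∫ x, h x ∂μp n) + (-(∫ x, h x ∂μm n)) + (-(∫ x, h x ∂ωp)) + (∫ x, h x ∂ωm) := by ring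
  rw [key]
  have habs : ∀ a b c d e : ℝ, |a + b + c + d + e| ≤ |a| + |b| + |c| + |d| + |e| := by
    intro a b c d e
    calc |a + b + c + d + e| ≤ |a + b + c + d| + |e| := abs_add_le _ _
      _ ≤ |a + b + c| + |d| + |e| := by gcongr; exact abs_add_le _ _
      _ ≤ |a + b| + |c| + |d| + |e| := by gcongr; exact abs_add_le _ _
      _ ≤ |a| + |b| + |c| + |d| + |e| := by gcongr; exact abs_add_le _ _
  refine lt_of_le_of_lt (habs _ _ _ _ _) ?_
  rw [abs_neg, abs_neg]
  have e1 : |∫ x, h x ∂μp n| + |∫ x, h x ∂μm n| ≤ M * (2 * δ) := by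
    calc |∫ x, h x ∂μp n| + |∫ x, h x ∂μm n|
        ≤ M * (μp n S).toReal + M * (μm n S).toReal := add_le_add hHμp hHμm
      _ = M * ((μp n S).toReal + (μm n S).toReal) := by ring
      _ ≤ M * (2 * δ) := by
          apply mul_le_mul_of_nonneg_left hμpS.le hMpos.le
  have e2 : |∫ x, h x ∂ωp| + |∫ x, h x ∂ωm| ≤ M * (2 * δ) := by
    calc |∫ x, h x ∂ωp| + |∫ x, h x ∂ωm| ≤ M * δ + M * δ := add_le_add hHωp hHωm
      _ = M * (2 * δ) := by ring
  have hMδ : M * (2 * δ) = ε / 3 := by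
    rw [hδdef]; field_simp; ring
  linarith [hGn]
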